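/- For all a, e ∈ M: if a α e and (a, e) ∈ β ∘ γ ∘ β ∘ γ, then (a, e) ∈ (αβ) ∘ (αγ) ∘ (αβ) ∘ (αγ) ∘ (αβ) ∘ (αγ) ∘ (αβ) ∘ (αγ) (the alternating composition with 8 factors, starting with αβ). Equivalently, α(β∘γ∘β∘γ) ⊆ αβ∘αγ∘αβ∘αγ∘αβ∘αγ∘αβ∘αγ. (Theorem 2.2, stated for an arbitrary algebra in a 4-distributive variety.) -/

import Mathlib

/-- Alternating relational composition with `k` factors, alternating between
`δ` and `ε`, starting with `δ`.  `AltRel δ ε 0` is equality. -/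
def AltRel {M : Type*} (δ ε : M → M → Prop) : ℕ → M → M → Prop
  | 0, x, z => x = z
  | k+1, x, z => ∃ y, δ x y ∧ AltRel ε δ k y z

/-- A ternary operation `t` is compatible with the relation `θ`. -/
def Compat {M : Type*} (θ : M → M → Prop) (t : M → M → M → M) : Prop :=
  ∀ x x' y y' z z', θ x x' → θ y y' → θ z z' → θ (t x y z) (t x' y' z')

theorem stmt_2
    {M : Type*} [Nonempty M]
    (t1 t2 t3 : M → M → M → M) (α β γ : M → M → Prop)
    (hJ1 : ∀ x y : M, t1 x y x = x)
    (hJ2 : ∀ x y : M, t2 x y x = x)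
    (hJ3 : ∀ x y : M, t3 x y x = x)
    (hJ4 : ∀ x z : M, t1 x x z = x)
    (hJ5 : ∀ x z : M, t1 x z z = t2 x z z)
    (hJ6 : ∀ x z : M, t2 x x z = t3 x x z)
    (hJ7 : ∀ x z : M, t3 x z z = z)
    (hα : Equivalence α) (hβ : Equivalence β) (hγ : Equivalence γ)
    (hcong : ∀ θ ∈ ({α, β, γ} : Set (M → M → Prop)),
      Compat θ t1 ∧ Compat θ t2 ∧ Compat θ t3)
    (a e : M) (hae : α a e) (h : AltRel β γ 4 a e) :
    AltRel (fun x y => α x y ∧ β x y) (fun x y => α x y ∧ γ x y) 8 a e := by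
  obtain ⟨b, hab, c, hbc, d, hcd, e', hde, he⟩ := h
  rw [he] at hde
  obtain ⟨Ca1, Ca2, Ca3⟩ := hcong α (by simp)
  obtain ⟨Cb1, Cb2, Cb3⟩ := hcong β (by simp)
  obtain ⟨Cg1, Cg2, Cg3⟩ := hcong γ (by simp)
  have hb2 : β a b := hab
  have hb3 : β a (t1 a b e) := by
    have hh := Cb1 a a a b e e (hβ.refl a) hb2 (hβ.refl e)
    simp only [hJ1, hJ2, hJ3, hJ4, hJ7, ← hJ5, ← hJ6] at hh ⊢
    exact hh
  have hb1 : β a (t3 (t1 a e e) b (t1 a b e)) := by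
    have hh := Cb3 (t1 a e e) (t1 a e e) a b a (t1 a b e) (hβ.refl (t1 a e e)) hb2 hb3
    simp only [hJ1, hJ2, hJ3, hJ4, hJ7, ← hJ5, ← hJ6] at hh ⊢
    exact hh
  have hg6 : γ e d := hγ.symm hde
  have hg5 : γ (t1 a e e) (t2 a d e) := by
    have hh := Cg2 a a e d e e (hγ.refl a) hg6 (hγ.refl e)
    simp only [hJ1, hJ2, hJ3, hJ4, hJ7, ← hJ5, ← hJ6] at hh ⊢
    exact hh
  have hg8 : γ b c := hbc
  have hg7 : γ b (t1 b c c) := by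
    have hh := Cg1 b b b c c c (hγ.refl b) hg8 (hγ.refl c)
    simp only [hJ1, hJ2, hJ3, hJ4, hJ7, ← hJ5, ← hJ6] at hh ⊢
    exact hh
  have hg9 : γ (t1 a b e) (t1 a c e) := by
    have hh := Cg1 a a b c e e (hγ.refl a) hg8 (hγ.refl e)
    exact hh
  have hg4 : γ (t3 (t1 a e e) b (t1 a b e)) (t3 (t2 a d e) (t1 b c c) (t1 a c e)) := by
    have hh := Cg3 (t1 a e e) (t2 a d e) b (t1 b c c) (t1 a b e) (t1 a c e) hg5 hg7 hg9
    exact hh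
  have hb12 : β d c := hβ.symm hcd
  have hb11 : β (t2 a d e) (t2 a c e) := by
    have hh := Cb2 a a d c e e (hβ.refl a) hb12 (hβ.refl e)
    exact hh
  have hb14 : β b a := hβ.symm hab
  have hb15 : β c d := hcd
  have hb13 : β (t1 b c c) (t2 a c d) := by
    have hh := Cb2 b a c c c d hb14 (hβ.refl c) hb15
    simp only [hJ1, hJ2, hJ3, hJ4, hJ7, ← hJ5, ← hJ6] at hh ⊢
    exact hh
  have hb16 : β (t1 a c e) (t1 a d e) := by
    have hh := Cb1 a a c d e e (hβ.refl a) hb15 (hβ.refl e)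
    exact hh
  have hb10 : β (t3 (t2 a d e) (t1 b c c) (t1 a c e)) (t3 (t2 a c e) (t2 a c d) (t1 a d e)) := by
    have hh := Cb3 (t2 a d e) (t2 a c e) (t1 b c c) (t2 a c d) (t1 a c e) (t1 a d e) hb11 hb13 hb16
    exact hh
  have hg19 : γ c b := hγ.symm hbc
  have hg18 : γ (t2 a c e) (t2 a b e) := by
    have hh := Cg2 a a c b e e (hγ.refl a) hg19 (hγ.refl e)
    exact hh
  have hg21 : γ d e := hde
  have hg20 : γ (t2 a c d) (t2 a b e) := by
    have hh := Cg2 a a c b d e (hγ.refl a) hg19 hg21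
    exact hh
  have hg22 : γ (t1 a d e) (t1 a e e) := by
    have hh := Cg1 a a d e e e (hγ.refl a) hg21 (hγ.refl e)
    exact hh
  have hg17 : γ (t3 (t2 a c e) (t2 a c d) (t1 a d e)) (t2 (t2 a b e) (t2 a b e) (t1 a e e)) := by
    have hh := Cg3 (t2 a c e) (t2 a b e) (t2 a c d) (t2 a b e) (t1 a d e) (t1 a e e) hg18 hg20 hg22
    simp only [hJ1, hJ2, hJ3, hJ4, hJ7, ← hJ5, ← hJ6] at hh ⊢
    exact hh
  have hg24 : γ (t2 a b e) (t2 a c e) := by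
    have hh := Cg2 a a b c e e (hγ.refl a) hg8 (hγ.refl e)
    exact hh
  have hg23 : γ (t2 (t2 a b e) (t2 a b e) (t1 a e e)) (t2 (t2 a b e) (t2 a c e) (t2 a d e)) := by
    have hh := Cg2 (t2 a b e) (t2 a b e) (t2 a b e) (t2 a c e) (t1 a e e) (t2 a d e) (hγ.refl (t2 a b e)) hg24 hg5
    exact hh
  have hb25 : β (t2 (t2 a b e) (t2 a c e) (t2 a d e)) (t1 (t2 a b e) (t2 a c e) (t2 a c e)) := by
    have hh := Cb2 (t2 a b e) (t2 a b e) (t2 a c e) (t2 a c e) (t2 a d e) (t2 a c e) (hβ.refl (t2 a b e)) (hβ.refl (t2 a c e)) hb11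
    simp only [hJ1, hJ2, hJ3, hJ4, hJ7, ← hJ5, ← hJ6] at hh ⊢
    exact hh
  have hb27 : β (t2 a b e) (t2 a a e) := by
    have hh := Cb2 a a b a e e (hβ.refl a) hb14 (hβ.refl e)
    exact hh
  have hb28 : β (t2 a c e) (t2 a d e) := by
    have hh := Cb2 a a c d e e (hβ.refl a) hb15 (hβ.refl e)
    exact hh
  have hb26 : β (t1 (t2 a b e) (t2 a c e) (t2 a c e)) (t1 (t2 a a e) (t2 a c e) (t2 a d e)) := by
    have hh := Cb1 (t2 a b e) (t2 a a e) (t2 a c e) (t2 a c e) (t2 a c e) (t2 a d e) hb27 (hβ.refl (t2 a c e)) hb28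
    exact hh
  have hb30 : β (t2 a a e) (t3 a b e) := by
    have hh := Cb3 a a a b e e (hβ.refl a) hb2 (hβ.refl e)
    simp only [hJ1, hJ2, hJ3, hJ4, hJ7, ← hJ5, ← hJ6] at hh ⊢
    exact hh
  have hb31 : β (t2 a c e) (t2 b c e) := by
    have hh := Cb2 a b c c e e hb2 (hβ.refl c) (hβ.refl e)
    exact hh
  have hb29 : β (t1 (t2 a a e) (t2 a c e) (t2 a d e)) (t1 (t3 a b e) (t2 b c e) (t2 a d e)) := by
    have hh := Cb1 (t2 a a e) (t3 a b e) (t2 a c e) (t2 b c e) (t2 a d e) (t2 a d e) hb30 hb31 (hβ.refl (t2 a d e))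
    exact hh
  have hg33 : γ (t2 b c e) (t2 b b d) := by
    have hh := Cg2 b b c b e d (hγ.refl b) hg19 hg6
    exact hh
  have hg32 : γ (t1 (t3 a b e) (t2 b c e) (t2 a d e)) (t1 (t3 a b e) (t2 b b d) (t2 a d e)) := by
    have hh := Cg1 (t3 a b e) (t3 a b e) (t2 b c e) (t2 b b d) (t2 a d e) (t2 a d e) (hγ.refl (t3 a b e)) hg33 (hγ.refl (t2 a d e))
    exact hh
  have hg35 : γ (t3 a b e) (t3 a c e) := by
    have hh := Cg3 a a b c e e (hγ.refl a) hg8 (hγ.refl e)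
    exact hh
  have hg36 : γ (t2 b b d) (t3 b c e) := by
    have hh := Cg3 b b b c d e (hγ.refl b) hg8 hg21
    simp only [hJ1, hJ2, hJ3, hJ4, hJ7, ← hJ5, ← hJ6] at hh ⊢
    exact hh
  have hg37 : γ (t2 a d e) (t1 a e e) := by
    have hh := Cg2 a a d e e e (hγ.refl a) hg21 (hγ.refl e)
    simp only [hJ1, hJ2, hJ3, hJ4, hJ7, ← hJ5, ← hJ6] at hh ⊢
    exact hh
  have hg34 : γ (t1 (t3 a b e) (t2 b b d) (t2 a d e)) (t1 (t3 a c e) (t3 b c e) (t1 a e e)) := by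
    have hh := Cg1 (t3 a b e) (t3 a c e) (t2 b b d) (t3 b c e) (t2 a d e) (t1 a e e) hg35 hg36 hg37
    exact hh
  have hb39 : β (t3 b c e) (t3 a c e) := by
    have hh := Cb3 b a c c e e hb14 (hβ.refl c) (hβ.refl e)
    exact hh
  have hb38 : β (t1 (t3 a c e) (t3 b c e) (t1 a e e)) (t3 a c e) := by
    have hh := Cb1 (t3 a c e) (t3 a c e) (t3 b c e) (t3 a c e) (t1 a e e) (t1 a e e) (hβ.refl (t3 a c e)) hb39 (hβ.refl (t1 a e e))
    simp only [hJ1, hJ2, hJ3, hJ4, hJ7, ← hJ5, ← hJ6] at hh ⊢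
    exact hh
  have hb41 : β (t2 c c e) (t3 c d e) := by
    have hh := Cb3 c c c d e e (hβ.refl c) hb15 (hβ.refl e)
    simp only [hJ1, hJ2, hJ3, hJ4, hJ7, ← hJ5, ← hJ6] at hh ⊢
    exact hh
  have hb42 : β (t3 a c e) (t3 a d e) := by
    have hh := Cb3 a a c d e e (hβ.refl a) hb15 (hβ.refl e)
    exact hh
  have hb40 : β (t3 a c e) (t3 (t3 a c e) (t3 c d e) (t3 a d e)) := by
    have hh := Cb3 (t3 a c e) (t3 a c e) (t2 c c e) (t3 c d e) (t3 a c e) (t3 a d e) (hβ.refl (t3 a c e)) hb41 hb42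
    simp only [hJ1, hJ2, hJ3, hJ4, hJ7, ← hJ5, ← hJ6] at hh ⊢
    exact hh
  have hg44 : γ (t3 c d e) e := by
    have hh := Cg3 c b d e e e hg19 hg21 (hγ.refl e)
    simp only [hJ1, hJ2, hJ3, hJ4, hJ7, ← hJ5, ← hJ6] at hh ⊢
    exact hh
  have hg45 : γ (t3 a d e) e := by
    have hh := Cg3 a a d e e e (hγ.refl a) hg21 (hγ.refl e)
    simp only [hJ1, hJ2, hJ3, hJ4, hJ7, ← hJ5, ← hJ6] at hh ⊢
    exact hh
  have hg43 : γ (t3 (t3 a c e) (t3 c d e) (t3 a d e)) e := by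
    have hh := Cg3 (t3 a c e) (t3 a c e) (t3 c d e) e (t3 a d e) e (hγ.refl (t3 a c e)) hg44 hg45
    simp only [hJ1, hJ2, hJ3, hJ4, hJ7, ← hJ5, ← hJ6] at hh ⊢
    exact hh
  have hA1 : α (t1 a e e) a := by
    have hh := Ca1 a a e e e a (hα.refl a) (hα.refl e) (hα.symm hae)
    simp only [hJ1] at hh
    exact hh
  have hA2 : α (t1 a b e) a := by
    have hh := Ca1 a a b b e a (hα.refl a) (hα.refl b) (hα.symm hae)
    simp only [hJ1] at hh
    exact hh
  have hA3 : α (t3 (t1 a e e) b (t1 a b e)) a := by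
    have hh := Ca3 (t1 a e e) a b b (t1 a b e) a hA1 (hα.refl b) hA2
    simp only [hJ3] at hh
    exact hh
  have hA4 : α (t2 a d e) a := by
    have hh := Ca2 a a d d e a (hα.refl a) (hα.refl d) (hα.symm hae)
    simp only [hJ2] at hh
    exact hh
  have hA5 : α (t1 a c e) a := by
    have hh := Ca1 a a c c e a (hα.refl a) (hα.refl c) (hα.symm hae)
    simp only [hJ1] at hh
    exact hh
  have hA6 : α (t3 (t2 a d e) (t1 b c c) (t1 a c e)) a := by
    have hh := Ca3 (t2 a d e) a (t1 b c c) (t1 b c c) (t1 a c e) a hA4 (hα.refl (t1 b c c)) hA5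
    simp only [hJ3] at hh
    exact hh
  have hA7 : α (t2 a c e) a := by
    have hh := Ca2 a a c c e a (hα.refl a) (hα.refl c) (hα.symm hae)
    simp only [hJ2] at hh
    exact hh
  have hA8 : α (t1 a d e) a := by
    have hh := Ca1 a a d d e a (hα.refl a) (hα.refl d) (hα.symm hae)
    simp only [hJ1] at hh
    exact hh
  have hA9 : α (t3 (t2 a c e) (t2 a c d) (t1 a d e)) a := by
    have hh := Ca3 (t2 a c e) a (t2 a c d) (t2 a c d) (t1 a d e) a hA7 (hα.refl (t2 a c d)) hA8
    simp only [hJ3] at hh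
    exact hh
  have hA10 : α (t2 a b e) a := by
    have hh := Ca2 a a b b e a (hα.refl a) (hα.refl b) (hα.symm hae)
    simp only [hJ2] at hh
    exact hh
  have hA11 : α (t2 (t2 a b e) (t2 a c e) (t2 a d e)) a := by
    have hh := Ca2 (t2 a b e) a (t2 a c e) (t2 a c e) (t2 a d e) a hA10 (hα.refl (t2 a c e)) hA4
    simp only [hJ2] at hh
    exact hh
  have hA12 : α (t3 a b e) a := by
    have hh := Ca3 a a b b e a (hα.refl a) (hα.refl b) (hα.symm hae)
    simp only [hJ3] at hh
    exact hh
  have hA13 : α (t1 (t3 a b e) (t2 b c e) (t2 a d e)) a := by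
    have hh := Ca1 (t3 a b e) a (t2 b c e) (t2 b c e) (t2 a d e) a hA12 (hα.refl (t2 b c e)) hA4
    simp only [hJ1] at hh
    exact hh
  have hA14 : α (t3 a c e) a := by
    have hh := Ca3 a a c c e a (hα.refl a) (hα.refl c) (hα.symm hae)
    simp only [hJ3] at hh
    exact hh
  have hA15 : α (t1 (t3 a c e) (t3 b c e) (t1 a e e)) a := by
    have hh := Ca1 (t3 a c e) a (t3 b c e) (t3 b c e) (t1 a e e) a hA14 (hα.refl (t3 b c e)) hA1
    simp only [hJ1] at hh
    exact hh
  have hA16 : α (t3 a d e) a := by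
    have hh := Ca3 a a d d e a (hα.refl a) (hα.refl d) (hα.symm hae)
    simp only [hJ3] at hh
    exact hh
  have hA17 : α (t3 (t3 a c e) (t3 c d e) (t3 a d e)) a := by
    have hh := Ca3 (t3 a c e) a (t3 c d e) (t3 c d e) (t3 a d e) a hA14 (hα.refl (t3 c d e)) hA16
    simp only [hJ3] at hh
    exact hh
  exact ⟨(t3 (t1 a e e) b (t1 a b e)), ⟨(hα.trans (hα.refl a) (hα.symm hA3)), hb1⟩, ⟨(t3 (t2 a d e) (t1 b c c) (t1 a c e)), ⟨(hα.trans hA3 (hα.symm hA6)), hg4⟩, ⟨(t3 (t2 a c e) (t2 a c d) (t1 a d e)), ⟨(hα.trans hA6 (hα.symm hA9)), hb10⟩, ⟨(t2 (t2 a b e) (t2 a c e) (t2 a d e)), ⟨(hα.trans hA9 (hα.symm hA11)), (hγ.trans hg17 hg23)⟩, ⟨(t1 (t3 a b e) (t2 b c e) (t2 a d e)), ⟨(hα.trans hA11 (hα.symm hA13)), (hβ.trans (hβ.trans hb25 hb26) hb29)⟩, ⟨(t1 (t3 a c e) (t3 b c e) (t1 a e e)), ⟨(hα.trans hA13 (hα.symm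 hA15)), (hγ.trans hg32 hg34)⟩, ⟨(t3 (t3 a c e) (t3 c d e) (t3 a d e)), ⟨(hα.trans hA15 (hα.symm hA17)), (hβ.trans hb38 hb40)⟩, ⟨e, ⟨(hα.trans hA17 (hα.symm (hα.symm hae))), hg43⟩, rfl⟩⟩⟩⟩⟩⟩⟩⟩
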